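/- Let (X, τ, 𝔐, μ) be a topological measure space (μ a nonnegative measure on a σ-algebra 𝔐 containing all Borel sets) such that every open set U ⊆ X can be written as U = F ∪ Z where F is an F_σ set and Z is a μ-null set. Then for every Borel set B with μ(B) < ∞ and every ε > 0, there exists a closed set C ⊆ B with μ(B \ C) < ε. -/

import Mathlib

open MeasureTheory Set Topology
open scoped ENNReal NNReal

lemma aux_closed_approx {X : Type*} [TopologicalSpace X] [MeasurableSpace X] [BorelSpace X]
    (ν : Measure X) [IsFiniteMeasure ν]
    (H : ν.InnerRegularWRT IsClosed IsOpen)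
    (B : Set X) (hB : MeasurableSet B) {ε : ℝ≥0∞} (hε : ε ≠ 0) :
    ∃ C, C ⊆ B ∧ IsClosed C ∧ ν (B \ C) < ε :=
  haveI := H.weaklyRegular_of_finite ν
  hB.exists_isClosed_diff_lt (measure_ne_top ν B) hε

theorem stmt0 {X : Type*} [TopologicalSpace X] [MeasurableSpace X]
    (hBorel : ∀ s : Set X, IsOpen s → MeasurableSet s)
    (μ : Measure X)
    (hFsigma : ∀ U : Set X, IsOpen U →
      ∃ (F Z : Set X) (C : ℕ → Set X),
        (∀ n, IsClosed (C n)) ∧ F = ⋃ n, C n ∧ μ Z = 0 ∧ U = F ∪ Z)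
    (B : Set X) (hB : MeasurableSet[borel X] B) (hBfin : μ B < ⊤)
    (ε : ℝ≥0∞) (hε : 0 < ε) :
    ∃ C : Set X, IsClosed C ∧ C ⊆ B ∧ μ (B \ C) < ε := by
  have hm : borel X ≤ ‹MeasurableSpace X› :=
    MeasurableSpace.generateFrom_le fun s hs => hBorel s hs
  haveI hbs : @BorelSpace X _ (borel X) := @BorelSpace.mk X _ (borel X) rfl
  set ν : @Measure X (borel X) := (μ.restrict B).trim hm with hν
  haveI hfin : @IsFiniteMeasure X (borel X) ν := by
    refine @IsFiniteMeasure.mk X (borel X) ν ?_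
    rw [hν, trim_measurableSet_eq hm MeasurableSet.univ, Measure.restrict_apply_univ]
    exact hBfin
  -- closedness/measurability helpers
  have hclosed_meas : ∀ {C : Set X}, IsClosed C → MeasurableSet[borel X] C := by
    intro C hC
    have h1 : MeasurableSet[borel X] Cᶜ :=
      MeasurableSpace.measurableSet_generateFrom hC.isOpen_compl
    simpa using h1.compl
  have hH : @Measure.InnerRegularWRT X (borel X) ν IsClosed IsOpen := by
    intro U hU r hr
    obtain ⟨F, Z, C, hC, hF, hZ, hUeq⟩ := hFsigma U hU
    have hνU : ν U = μ.restrict B U :=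
      trim_measurableSet_eq hm (MeasurableSpace.measurableSet_generateFrom hU)
    have h1 : μ.restrict B U ≤ μ.restrict B F := by
      calc μ.restrict B U ≤ μ.restrict B F + μ.restrict B Z := by
            rw [hUeq]; exact measure_union_le _ _
        _ ≤ μ.restrict B F + μ Z := by gcongr; exact Measure.restrict_le_self
        _ = μ.restrict B F := by rw [hZ, add_zero]
    have h2 : μ.restrict B F = ⨆ n, μ.restrict B (accumulate C n) := by
      rw [hF]; exact measure_iUnion_eq_iSup_accumulate
    have hr' : r < ⨆ n, μ.restrict B (accumulate C n) := by
      rw [← h2]; exact lt_of_lt_of_le hr (hνU ▸ h1)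
    obtain ⟨n, hn⟩ := lt_iSup_iff.mp hr'
    have hKclosed : IsClosed (accumulate C n) := by
      have : Set.accumulate C n = ⋃ i ∈ Set.Iic n, C i := rfl
      rw [this]
      exact (Set.finite_Iic n).isClosed_biUnion fun i _ => hC i
    have hKsub : accumulate C n ⊆ U := by
      rw [hUeq, hF]
      have h3 : accumulate C n ⊆ ⋃ i, C i := by
        rw [← Set.iUnion_accumulate]; exact subset_iUnion _ n
      exact h3.trans subset_union_left
    refine ⟨accumulate C n, hKsub, hKclosed, ?_⟩
    rwa [trim_measurableSet_eq hm (hclosed_meas hKclosed)]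
  obtain ⟨Cl, hClB, hClclosed, hClε⟩ :=
    @aux_closed_approx X _ (borel X) hbs ν hfin hH B hB ε hε.ne'
  refine ⟨Cl, hClclosed, hClB, ?_⟩
  have hmeas : MeasurableSet[borel X] (B \ Cl) := hB.diff (hclosed_meas hClclosed)
  rwa [hν, trim_measurableSet_eq hm hmeas, Measure.restrict_apply (hm _ hmeas),
    Set.inter_eq_left.mpr Set.diff_subset] at hClε
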